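/- (Existence of the divergence decomposition in the main example.) For every finitely supported family f = (f^i_α) ∈ F̄^I_{A′} there exists a finitely supported family χ = (χ^{μ i}_α) such that f − ι(j*f) = ∇*χ, where (j*f)_α = Σ_i (−1)^{|i|} D^i(f^i_α), ι is the injection (ιg)^i_α = g_α if i = 0 and 0 otherwise, and (∇*χ)^i_α = Σ_μ ( D_μ χ^{μ i}_α + χ^{μ, i−e_μ}_α ), terms with i^μ = 0 being omitted. -/

import Mathlib

noncomputable section

variable {𝔽 : Type*} [Field 𝔽] {F : Type*} [CommRing F] [Algebra 𝔽 F] {m : ℕ}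
  {A A' : Type*}

/-- Membership in the space of divergences `Div F^M = {Σ_μ D_μ ψ^μ}`. -/
def IsDiv (D : Fin m → Derivation 𝔽 F F) (f : F) : Prop :=
  ∃ ψ : Fin m → F, f = ∑ μ, D μ (ψ μ)

/-- The evolutionary differentiation `ev_φ f = Σ_a φ^a · ∂_a f` (a finite sum). -/
def ev (pa : A → Derivation 𝔽 F F) (φ : A → F) (f : F) : F :=
  ∑ᶠ a, φ a * pa a f

/-- `(∇φ)^a_μ = D_μ φ^a + Σ_b Γ^a_{μb} · φ^b`; here `Γ b μ a` denotes `Γ^b_{μa}`. -/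
def nabla (D : Fin m → Derivation 𝔽 F F) (Γ : A → Fin m → A → F)
    (φ : A → F) (a : A) (μ : Fin m) : F :=
  D μ (φ a) + ∑ᶠ b, Γ a μ b * φ b

/-- `(∇*χ)_a = -Σ_μ D_μ χ^μ_a + Σ_{μ,b} Γ^b_{μa} · χ^μ_b`. -/
def nablaStar (D : Fin m → Derivation 𝔽 F F) (Γ : A → Fin m → A → F)
    (χ : Fin m → A → F) (a : A) : F :=
  -∑ μ, D μ (χ μ a) + ∑ᶠ b, ∑ μ, Γ b μ a * χ μ b

/-- The pairing `⟨f, φ⟩ = Σ_a f_a · φ^a`. -/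
def pair (f φ : A → F) : F := ∑ᶠ a, f a * φ a

/-- `D^i = D_1^{i^1} ∘ ⋯ ∘ D_m^{i^m}`. -/
def Dpow (D : Fin m → Derivation 𝔽 F F) (i : Fin m → ℕ) : F → F :=
  (List.finRange m).foldr (fun μ g => (⇑(D μ))^[i μ] ∘ g) id

/-- `|i| = i^1 + ⋯ + i^m`. -/
def msize {m : ℕ} (i : Fin m → ℕ) : ℕ := ∑ μ, i μ

/-- The differential operator `P(D)L = Σ_i P_i · D^i L`. -/
def applyP (D : Fin m → Derivation 𝔽 F F) (P : (Fin m → ℕ) → F) (L : F) : F :=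
  ∑ᶠ i, P i * Dpow D i L

/-- The Lagrange dual operator `P*(D)K = Σ_i (-1)^{|i|} D^i (P_i · K)`. -/
def applyPstar (D : Fin m → Derivation 𝔽 F F) (P : (Fin m → ℕ) → F) (K : F) : F :=
  ∑ᶠ i, (-1 : F) ^ msize i * Dpow D i (P i * K)

/-- The jet map `(jφ)^a = Σ_{i,α} j^a_{iα} · D^i φ^α`; here `jc a i α` denotes `j^a_{iα}`. -/
def jmap (D : Fin m → Derivation 𝔽 F F) (jc : A → (Fin m → ℕ) → A' → F)
    (φ : A' → F) (a : A) : F :=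
  ∑ᶠ i, ∑ᶠ α, jc a i α * Dpow D i (φ α)

/-- The Lagrange dual `(j*f)_α = Σ_{a,i} (-1)^{|i|} D^i (j^a_{iα} · f_a)`. -/
def jstar (D : Fin m → Derivation 𝔽 F F) (jc : A → (Fin m → ℕ) → A' → F)
    (f : A → F) (α : A') : F :=
  ∑ᶠ a, ∑ᶠ i, (-1 : F) ^ msize i * Dpow D i (jc a i α * f a)

/-- `(Λf)^α = Σ_{β,i} Λ^{αβ}_i · D^i f_β`; here `Λc α β i` denotes `Λ^{αβ}_i`. -/
def Lam (D : Fin m → Derivation 𝔽 F F) (Λc : A' → A' → (Fin m → ℕ) → F)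
    (f : A' → F) (α : A') : F :=
  ∑ᶠ β, ∑ᶠ i, Λc α β i * Dpow D i (f β)

/-- The Lagrange dual `(Λ*f)^α = Σ_{β,i} (-1)^{|i|} D^i (Λ^{βα}_i · f_β)`. -/
def LamStar (D : Fin m → Derivation 𝔽 F F) (Λc : A' → A' → (Fin m → ℕ) → F)
    (f : A' → F) (α : A') : F :=
  ∑ᶠ β, ∑ᶠ i, (-1 : F) ^ msize i * Dpow D i (Λc β α i * f β)

/-- The variational derivative `δR = j*(∂R)`, where `∂R = (∂_a R)`. -/
def vard (D : Fin m → Derivation 𝔽 F F) (pa : A → Derivation 𝔽 F F)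
    (jc : A → (Fin m → ℕ) → A' → F) (R : F) : A' → F :=
  jstar D jc (fun a => pa a R)

/-- The Hamiltonian vector `φ(R) = j(Λ(δR))`. -/
def hamv (D : Fin m → Derivation 𝔽 F F) (pa : A → Derivation 𝔽 F F)
    (jc : A → (Fin m → ℕ) → A' → F) (Λc : A' → A' → (Fin m → ℕ) → F) (R : F) : A → F :=
  jmap D jc (Lam D Λc (vard D pa jc R))

/-- The commutator `[ev_ψ, Λ]`, acting with coefficients `ev_ψ(Λ^{αβ}_i)`. -/
def evLam (D : Fin m → Derivation 𝔽 F F) (pa : A → Derivation 𝔽 F F)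
    (Λc : A' → A' → (Fin m → ℕ) → F) (ψ : A → F) (f : A' → F) (α : A') : F :=
  ∑ᶠ β, ∑ᶠ i, ev pa ψ (Λc α β i) * Dpow D i (f β)

/-- In the main example: `(j*f)_α = Σ_i (-1)^{|i|} D^i (f^i_α)`. -/
def jstarEx {𝔽 : Type*} [Field 𝔽] {F : Type*} [CommRing F] [Algebra 𝔽 F] {m : ℕ}
    {A' : Type*} (D : Fin m → Derivation 𝔽 F F)
    (f : (Fin m → ℕ) → A' → F) (α : A') : F :=
  ∑ᶠ i, (-1 : F) ^ msize i * Dpow D i (f i α)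

/-- In the main example: `(∇*χ)^i_α = Σ_μ (D_μ χ^{μ,i}_α + χ^{μ,i-e_μ}_α)`,
the term `χ^{μ,i-e_μ}_α` being omitted when `i^μ = 0`. -/
def nablaStarEx {𝔽 : Type*} [Field 𝔽] {F : Type*} [CommRing F] [Algebra 𝔽 F] {m : ℕ}
    {A' : Type*} (D : Fin m → Derivation 𝔽 F F)
    (χ : Fin m → (Fin m → ℕ) → A' → F) (i : Fin m → ℕ) (α : A') : F :=
  ∑ μ, (D μ (χ μ i α)
    + if i μ = 0 then 0 else χ μ (Function.update i μ (i μ - 1)) α)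

section Aux

variable {F : Type*} [CommRing F] [Algebra ℚ F] {m : ℕ} {A' : Type*}
variable (D : Fin m → Derivation ℚ F F)

private lemma foldr_apply (i : Fin m → ℕ) (a : Fin m) (t : List (Fin m)) (x : F) :
    (a :: t).foldr (fun μ g => (⇑(D μ))^[i μ] ∘ g) id x
      = (⇑(D a))^[i a] (t.foldr (fun μ g => (⇑(D μ))^[i μ] ∘ g) id x) := rfl

private lemma foldr_congr {i i' : Fin m → ℕ} (l : List (Fin m))
    (h : ∀ μ ∈ l, i μ = i' μ) (x : F) :
    l.foldr (fun μ g => (⇑(D μ))^[i μ] ∘ g) id x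
      = l.foldr (fun μ g => (⇑(D μ))^[i' μ] ∘ g) id x := by
  induction l with
  | nil => rfl
  | cons a t ih =>
    rw [foldr_apply, foldr_apply, h a (by simp), ih (fun μ hμ => h μ (by simp [hμ]))]

private lemma foldr_of_zero {i : Fin m → ℕ} (l : List (Fin m))
    (h : ∀ μ ∈ l, i μ = 0) (x : F) :
    l.foldr (fun μ g => (⇑(D μ))^[i μ] ∘ g) id x = x := by
  induction l with
  | nil => rfl
  | cons a t ih =>
    rw [foldr_apply, h a (by simp), Function.iterate_zero, id_eq,
      ih (fun μ hμ => h μ (by simp [hμ]))]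

private lemma iter_neg (μ : Fin m) (k : ℕ) (x : F) :
    (⇑(D μ))^[k] (-x) = -((⇑(D μ))^[k] x) := by
  induction k generalizing x with
  | zero => rfl
  | succ n ih => rw [Function.iterate_succ_apply, Function.iterate_succ_apply, map_neg, ih]

private lemma iter_zero_val (μ : Fin m) (k : ℕ) :
    (⇑(D μ))^[k] (0 : F) = 0 := by
  induction k with
  | zero => rfl
  | succ n ih => rw [Function.iterate_succ_apply, map_zero, ih]

private lemma foldr_neg (i : Fin m → ℕ) (l : List (Fin m)) (x : F) :
    l.foldr (fun μ g => (⇑(D μ))^[i μ] ∘ g) id (-x)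
      = -(l.foldr (fun μ g => (⇑(D μ))^[i μ] ∘ g) id x) := by
  induction l with
  | nil => rfl
  | cons a t ih => rw [foldr_apply, foldr_apply, ih, iter_neg]

private lemma foldr_zero_val (i : Fin m → ℕ) (l : List (Fin m)) :
    l.foldr (fun μ g => (⇑(D μ))^[i μ] ∘ g) id (0 : F) = 0 := by
  induction l with
  | nil => rfl
  | cons a t ih => rw [foldr_apply, ih, iter_zero_val]

private lemma iter_comm (hDcomm : ∀ μ ν (f : F), D μ (D ν f) = D ν (D μ f))
    (μ ν : Fin m) (k : ℕ) (x : F) :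
    D ν ((⇑(D μ))^[k] x) = (⇑(D μ))^[k] (D ν x) := by
  induction k generalizing x with
  | zero => rfl
  | succ n ih =>
    rw [Function.iterate_succ_apply, Function.iterate_succ_apply, ih, hDcomm]

private lemma foldr_comm (hDcomm : ∀ μ ν (f : F), D μ (D ν f) = D ν (D μ f))
    (i : Fin m → ℕ) (ν : Fin m) (l : List (Fin m)) (x : F) :
    D ν (l.foldr (fun μ g => (⇑(D μ))^[i μ] ∘ g) id x)
      = l.foldr (fun μ g => (⇑(D μ))^[i μ] ∘ g) id (D ν x) := by
  induction l with
  | nil => rfl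
  | cons a t ih => rw [foldr_apply, foldr_apply, iter_comm D hDcomm, ih]

private lemma foldr_update (hDcomm : ∀ μ ν (f : F), D μ (D ν f) = D ν (D μ f))
    {j : Fin m → ℕ} {μ : Fin m} (hμ : j μ ≠ 0)
    (l : List (Fin m)) (hl : μ ∈ l) (hnd : l.Nodup) (x : F) :
    l.foldr (fun ν g => (⇑(D ν))^[j ν] ∘ g) id x
      = l.foldr (fun ν g => (⇑(D ν))^[(Function.update j μ (j μ - 1)) ν] ∘ g) id (D μ x) := by
  induction l with
  | nil => simp at hl
  | cons a t ih =>
    by_cases hae : a = μ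
    · subst hae
      have hnt : a ∉ t := (List.nodup_cons.mp hnd).1
      rw [foldr_apply, foldr_apply]
      have h1 : t.foldr (fun ν g => (⇑(D ν))^[j ν] ∘ g) id x
          = t.foldr (fun ν g => (⇑(D ν))^[(Function.update j a (j a - 1)) ν] ∘ g) id x :=
        foldr_congr D t (fun ν hν => by
          rw [Function.update_of_ne (fun h => hnt (by rw [← h]; exact hν))]) x
      have h2 : (Function.update j a (j a - 1)) a = j a - 1 := Function.update_self _ _ _
      rw [h1, h2]
      obtain ⟨k, hk⟩ : ∃ k, j a = k + 1 := ⟨j a - 1, by omega⟩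
      rw [hk]
      simp only [Nat.add_sub_cancel]
      rw [Function.iterate_succ_apply]
      congr 1
      exact foldr_comm D hDcomm _ a t x
    · have hmem : μ ∈ t := by
        rcases List.mem_cons.mp hl with h | h
        · exact absurd h.symm hae
        · exact h
      rw [foldr_apply, foldr_apply, ih hmem (List.nodup_cons.mp hnd).2,
        Function.update_of_ne hae]

private lemma Dpow_zero (x : F) : Dpow D (0 : Fin m → ℕ) x = x :=
  foldr_of_zero D _ (fun _ _ => rfl) x

private lemma Dpow_neg (i : Fin m → ℕ) (x : F) : Dpow D i (-x) = -(Dpow D i x) :=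
  foldr_neg D i _ x

private lemma Dpow_zero_val (i : Fin m → ℕ) : Dpow D i (0 : F) = 0 :=
  foldr_zero_val D i _

private lemma Dpow_update (hDcomm : ∀ μ ν (f : F), D μ (D ν f) = D ν (D μ f))
    {j : Fin m → ℕ} {μ : Fin m} (hμ : j μ ≠ 0) (x : F) :
    Dpow D j x = Dpow D (Function.update j μ (j μ - 1)) (D μ x) :=
  foldr_update D hDcomm hμ (List.finRange m) (List.mem_finRange μ) (List.nodup_finRange m) x

private lemma msize_update {j : Fin m → ℕ} {μ : Fin m} (hμ : j μ ≠ 0) :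
    msize j = msize (Function.update j μ (j μ - 1)) + 1 := by
  unfold msize
  have h0 : ∑ ν, j ν = j μ + ∑ x ∈ Finset.univ \ {μ}, j x :=
    Finset.sum_eq_add_sum_sdiff_singleton_of_mem (Finset.mem_univ μ) j
  rw [Finset.sum_update_of_mem (Finset.mem_univ μ), h0]
  omega

private lemma msize_update_lt {j : Fin m → ℕ} {μ : Fin m} (hμ : j μ ≠ 0) :
    msize (Function.update j μ (j μ - 1)) < msize j := by
  have := msize_update (j := j) (μ := μ) hμ
  omega

private lemma exists_ne_zero {j : Fin m → ℕ} (h : j ≠ 0) :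
    (Finset.univ.filter fun ν => j ν ≠ 0).Nonempty := by
  rcases Function.ne_iff.mp h with ⟨μ, hμ⟩
  exact ⟨μ, Finset.mem_filter.mpr ⟨Finset.mem_univ _, hμ⟩⟩

private def pick {j : Fin m → ℕ} (h : j ≠ 0) : Fin m :=
  (Finset.univ.filter fun ν => j ν ≠ 0).min' (exists_ne_zero h)

private lemma pick_spec {j : Fin m → ℕ} (h : j ≠ 0) : j (pick h) ≠ 0 :=
  (Finset.mem_filter.mp ((Finset.univ.filter fun ν => j ν ≠ 0).min'_mem (exists_ne_zero h))).2

/-- The basic building block of the divergence decomposition. -/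
private noncomputable def chi1 (D : Fin m → Derivation ℚ F F) (j : Fin m → ℕ) (g : F) :
    Fin m → (Fin m → ℕ) → F :=
  if h : j = 0 then 0
  else fun ν i =>
    (if ν = pick h ∧ i = Function.update j (pick h) (j (pick h) - 1) then g else 0)
    + chi1 D (Function.update j (pick h) (j (pick h) - 1)) (-(D (pick h) g)) ν i
termination_by msize j
decreasing_by exact msize_update_lt (pick_spec h)

/-- The divergence expression, without the `α` parameter. -/
private def nse (D : Fin m → Derivation ℚ F F) (χ : Fin m → (Fin m → ℕ) → F)
    (i : Fin m → ℕ) : F :=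
  ∑ μ, (D μ (χ μ i) + if i μ = 0 then 0 else χ μ (Function.update i μ (i μ - 1)))

private lemma nse_add (a b : Fin m → (Fin m → ℕ) → F) (i : Fin m → ℕ) :
    nse D (fun ν k => a ν k + b ν k) i = nse D a i + nse D b i := by
  unfold nse
  rw [← Finset.sum_add_distrib]
  refine Finset.sum_congr rfl fun μ _ => ?_
  rw [map_add]
  split_ifs <;> ring

private lemma nse_sum {ι : Type*} (s : Finset ι) (c : ι → Fin m → (Fin m → ℕ) → F)
    (i : Fin m → ℕ) :
    nse D (fun μ k => ∑ p ∈ s, c p μ k) i = ∑ p ∈ s, nse D (c p) i := by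
  classical
  induction s using Finset.induction_on with
  | empty => simp [nse]
  | insert x s hx ih =>
    rw [Finset.sum_insert hx, ← ih, ← nse_add]
    congr 1
    funext μ k
    rw [Finset.sum_insert hx]

private lemma upd_eq_iff {i j : Fin m → ℕ} {μ : Fin m} (hj : j μ ≠ 0) :
    (¬ i μ = 0 ∧ Function.update i μ (i μ - 1) = Function.update j μ (j μ - 1)) ↔ i = j := by
  constructor
  · rintro ⟨hi, h⟩
    funext ν
    by_cases hν : ν = μ
    · subst hν
      have h1 := congrFun h ν
      rw [Function.update_self, Function.update_self] at h1
      omega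
    · have h1 := congrFun h ν
      rwa [Function.update_of_ne hν, Function.update_of_ne hν] at h1
  · rintro rfl
    exact ⟨hj, rfl⟩

private lemma nse_single (μ : Fin m) (j' : Fin m → ℕ) (g : F) (i : Fin m → ℕ) :
    nse D (fun ν k => if ν = μ ∧ k = j' then g else 0) i
      = (if i = j' then D μ g else 0)
        + (if ¬ i μ = 0 ∧ Function.update i μ (i μ - 1) = j' then g else 0) := by
  unfold nse
  rw [Finset.sum_eq_single_of_mem μ (Finset.mem_univ μ)]
  · simp only [true_and]
    congr 1
    · rw [apply_ite (⇑(D μ)), map_zero]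
    · split_ifs <;> first | rfl | tauto
  · intro ν _ hν
    simp [hν]

private lemma chi1_spec (hDcomm : ∀ μ ν (f : F), D μ (D ν f) = D ν (D μ f))
    (j : Fin m → ℕ) (g : F) (i : Fin m → ℕ) :
    nse D (chi1 D j g) i =
      (if i = j then g else 0)
        - (if i = 0 then (-1 : F) ^ msize j * Dpow D j g else 0) := by
  rw [chi1]
  by_cases h : j = 0
  · rw [dif_pos h]
    subst h
    unfold nse
    simp only [Pi.zero_apply, map_zero, zero_add, ite_self, add_zero, Finset.sum_const_zero]
    rw [Dpow_zero]
    have hm : msize (0 : Fin m → ℕ) = 0 := by simp [msize]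
    rw [hm, pow_zero, one_mul]
    by_cases hi : i = 0 <;> simp [hi]
  · rw [dif_neg h]
    set μ := pick h with hμdef
    set j' := Function.update j μ (j μ - 1) with hj'
    have hμ : j μ ≠ 0 := pick_spec h
    have hrec := chi1_spec hDcomm j' (-(D μ g)) i
    rw [nse_add D (fun ν k => if ν = μ ∧ k = j' then g else 0) (chi1 D j' (-(D μ g))),
      nse_single, hrec]
    have h1 : Dpow D j' (-(D μ g)) = -(Dpow D j g) := by
      rw [Dpow_neg, ← Dpow_update D hDcomm hμ]
    have h2 : (-1 : F) ^ msize j' * -(Dpow D j g) = (-1 : F) ^ msize j * Dpow D j g := by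
      rw [msize_update (j := j) (μ := μ) hμ, ← hj', pow_succ]
      ring
    rw [h1, h2]
    have h3 : (¬ i μ = 0 ∧ Function.update i μ (i μ - 1) = j') ↔ i = j := upd_eq_iff hμ
    rw [if_congr h3 rfl rfl]
    split_ifs <;> ring
termination_by msize j
decreasing_by exact msize_update_lt (pick_spec h)

private lemma chi1_supp (j : Fin m → ℕ) (g : F) :
    {q : Fin m × (Fin m → ℕ) | chi1 D j g q.1 q.2 ≠ 0}.Finite := by
  by_cases h : j = 0
  · apply Set.Finite.subset (Set.finite_empty)
    intro q hq
    rw [chi1] at hq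
    simp only [dif_pos h, Set.mem_setOf_eq, Pi.zero_apply, ne_eq, not_true_eq_false] at hq
  · have ih := chi1_supp (Function.update j (pick h) (j (pick h) - 1)) (-(D (pick h) g))
    apply (ih.union (Set.finite_singleton
      (pick h, Function.update j (pick h) (j (pick h) - 1)))).subset
    intro q hq
    rw [chi1] at hq
    simp only [dif_neg h, Set.mem_setOf_eq] at hq
    by_cases hc : chi1 D (Function.update j (pick h) (j (pick h) - 1))
        (-(D (pick h) g)) q.1 q.2 ≠ 0
    · exact Or.inl hc
    · push_neg at hc
      rw [hc, add_zero] at hq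
      right
      by_cases hcond : q.1 = pick h ∧ q.2 = Function.update j (pick h) (j (pick h) - 1)
      · simp [Prod.ext_iff, hcond.1, hcond.2]
      · rw [if_neg hcond] at hq
        exact absurd rfl hq
termination_by msize j
decreasing_by exact msize_update_lt (pick_spec h)

end Aux

/-- existence of the divergence decomposition in the main
example: for every finitely supported `f` there is a finitely supported `χ`
with `f - ι(j*f) = ∇*χ`. -/
theorem stmt_17
    {F : Type*} [CommRing F] [Algebra ℚ F] {m : ℕ} {A' : Type*}
    (D : Fin m → Derivation ℚ F F)
    (hDcomm : ∀ μ ν (f : F), D μ (D ν f) = D ν (D μ f))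
    (f : (Fin m → ℕ) → A' → F)
    (hf : {p : (Fin m → ℕ) × A' | f p.1 p.2 ≠ 0}.Finite) :
    ∃ χ : Fin m → (Fin m → ℕ) → A' → F,
      {p : Fin m × (Fin m → ℕ) × A' | χ p.1 p.2.1 p.2.2 ≠ 0}.Finite ∧
      ∀ (i : Fin m → ℕ) (α : A'),
        f i α - (if i = 0 then jstarEx D f α else 0) = nablaStarEx D χ i α := by
  classical
  refine ⟨fun μ i α => ∑ p ∈ hf.toFinset.filter (fun p => p.2 = α), chi1 D p.1 (f p.1 α) μ i,
    ?_, ?_⟩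
  · apply Set.Finite.subset (Set.Finite.biUnion hf
      (fun p _ => ((chi1_supp D p.1 (f p.1 p.2)).image (fun r => (r.1, r.2, p.2)))))
    intro q hq
    simp only [Set.mem_setOf_eq] at hq
    obtain ⟨p, hp, hne⟩ := Finset.exists_ne_zero_of_sum_ne_zero hq
    obtain ⟨hpS, hpα⟩ := Finset.mem_filter.mp hp
    refine Set.mem_biUnion (hf.mem_toFinset.mp hpS) ?_
    refine ⟨(q.1, q.2.1), ?_, ?_⟩
    · simp only [Set.mem_setOf_eq]
      rw [hpα]
      exact hne
    · exact Prod.ext rfl (Prod.ext rfl hpα)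
  · intro i α
    set Sα := hf.toFinset.filter (fun p => p.2 = α) with hSα
    have e1 : nablaStarEx D
        (fun μ i α => ∑ p ∈ hf.toFinset.filter (fun p => p.2 = α), chi1 D p.1 (f p.1 α) μ i) i α
        = ∑ p ∈ Sα, nse D (chi1 D p.1 (f p.1 α)) i := by
      rw [show nablaStarEx D
          (fun μ i α => ∑ p ∈ hf.toFinset.filter (fun p => p.2 = α), chi1 D p.1 (f p.1 α) μ i)
          i α = nse D (fun μ k => ∑ p ∈ Sα, chi1 D p.1 (f p.1 α) μ k) i from rfl]
      exact nse_sum D Sα _ i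
    rw [e1, Finset.sum_congr rfl (fun p _ => chi1_spec D hDcomm p.1 (f p.1 α) i),
      Finset.sum_sub_distrib]
    have hA : ∑ p ∈ Sα, (if i = p.1 then f p.1 α else 0) = f i α := by
      have hcongr : ∀ p ∈ Sα, (if i = p.1 then f p.1 α else 0)
          = (if (i, α) = p then f i α else 0) := by
        intro p hp
        obtain ⟨hpS, hpα⟩ := Finset.mem_filter.mp hp
        by_cases hip : i = p.1
        · have hpe : (i, α) = p := Prod.ext hip hpα.symm
          rw [if_pos hip, if_pos hpe, hip]
        · rw [if_neg hip, if_neg (fun hc => hip (congrArg Prod.fst hc))]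
      rw [Finset.sum_congr rfl hcongr, Finset.sum_ite_eq]
      split_ifs with hmem
      · rfl
      · symm
        by_contra h0
        exact hmem (Finset.mem_filter.mpr ⟨hf.mem_toFinset.mpr h0, rfl⟩)
    have hB : ∑ p ∈ Sα, (if i = 0 then (-1 : F) ^ msize p.1 * Dpow D p.1 (f p.1 α) else 0)
        = if i = 0 then jstarEx D f α else 0 := by
      by_cases hi : i = 0
      · simp only [if_pos hi]
        rw [jstarEx]
        have hsub : Function.support (fun k => (-1 : F) ^ msize k * Dpow D k (f k α))
            ⊆ (Sα.image Prod.fst : Finset (Fin m → ℕ)) := by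
          intro k hk
          simp only [Function.mem_support] at hk
          have hfk : f k α ≠ 0 := fun h0 => hk (by rw [h0, Dpow_zero_val, mul_zero])
          simp only [Finset.coe_image, Set.mem_image, Finset.mem_coe]
          exact ⟨(k, α), Finset.mem_filter.mpr ⟨hf.mem_toFinset.mpr hfk, rfl⟩, rfl⟩
        rw [finsum_eq_sum_of_support_subset _ hsub]
        rw [Finset.sum_image (fun x hx y hy hxy => by
          have hx2 := (Finset.mem_filter.mp hx).2
          have hy2 := (Finset.mem_filter.mp hy).2
          exact Prod.ext hxy (hx2.trans hy2.symm))]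
      · simp [hi]
    rw [hA, hB]
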